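/- Fix N ∈ ℕ and dimensions n, m. For each time step k < N let A(k) be a real n×n matrix, B(k) a real n×m matrix, and let Q(k) (n×n), S(k) (n×m), R(k) (m×m) be stage-cost Hessian blocks such that the block matrix fromBlocks Q(k) S(k) S(k)ᵀ R(k) is positive definite. Let V : ℕ → (real n×n matrices) satisfy: V(N) is positive definite, and for every k < N the Riccati backward recursion V(k) = (Q(k) + A(k)ᵀ V(k+1) A(k)) - (S(k) + A(k)ᵀ V(k+1) B(k)) (R(k) + B(k)ᵀ V(k+1) B(k))⁻¹ (S(k) + A(k)ᵀ V(k+1) B(k))ᵀ holds. Then for every k ≤ N the matrix V(k) is positive definite, and for every k < N the control Hessian H_uu(k) = R(k) + B(k)ᵀ V(k+1) B(k) is positive definite. -/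

import Mathlib

open Matrix

/-- The (2,2) block of a positive definite block matrix is positive definite. -/
lemma posDef_block₂₂ {p q : Type*} [Fintype p] [Fintype q] [DecidableEq p] [DecidableEq q]
    {A : Matrix p p ℝ} {B : Matrix p q ℝ} {C : Matrix q p ℝ} {D : Matrix q q ℝ}
    (hM : (fromBlocks A B C D).PosDef) : D.PosDef := by
  rw [posDef_iff_dotProduct_mulVec]
  constructor
  · have h := hM.1
    rw [isHermitian_fromBlocks_iff] at h
    exact h.2.2.2
  · intro y hy
    have := (posDef_iff_dotProduct_mulVec.mp hM).2 (x := Sum.elim 0 y) (by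
      intro h
      apply hy
      ext i
      exact congrFun h (Sum.inr i))
    simpa [fromBlocks_mulVec, Function.star_sumElim, dotProduct] using this

/-- Positive-definite version of the Schur complement criterion (2,2 block). -/
lemma posDef_schur₂₂ {p q : Type*} [Fintype p] [Fintype q] [DecidableEq p] [DecidableEq q]
    {A : Matrix p p ℝ} {B : Matrix p q ℝ} {D : Matrix q q ℝ}
    (hM : (fromBlocks A B Bᴴ D).PosDef) : (A - B * D⁻¹ * Bᴴ).PosDef := by
  have hD : D.PosDef := posDef_block₂₂ hM
  haveI : Invertible D := hD.isUnit.invertible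
  rw [posDef_iff_dotProduct_mulVec]
  constructor
  · exact (Matrix.IsHermitian.fromBlocks₂₂ A B hD.1).mp hM.1
  · intro x hx
    set y : q → ℝ := -((D⁻¹ * Bᴴ) *ᵥ x) with hy
    have hz : Sum.elim x y ≠ 0 := by
      intro h
      apply hx
      ext i
      exact congrFun h (Sum.inl i)
    have hpos := (posDef_iff_dotProduct_mulVec.mp hM).2 (x := Sum.elim x y) hz
    have heq := Matrix.schur_complement_eq₂₂ A B x y (D := D) hD.1
    rw [dotProduct_mulVec] at hpos
    rw [heq] at hpos
    have h0 : (D⁻¹ * Bᴴ) *ᵥ x + y = 0 := by simp [hy]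
    rw [h0] at hpos
    simpa [dotProduct_mulVec] using hpos

/-- One Riccati step preserves positive definiteness. -/
lemma riccati_step {n m : ℕ}
    (A : Matrix (Fin n) (Fin n) ℝ) (B : Matrix (Fin n) (Fin m) ℝ)
    (Q : Matrix (Fin n) (Fin n) ℝ) (S : Matrix (Fin n) (Fin m) ℝ)
    (R : Matrix (Fin m) (Fin m) ℝ)
    (hL : (Matrix.fromBlocks Q S Sᵀ R).PosDef)
    {W : Matrix (Fin n) (Fin n) ℝ} (hW : W.PosDef) :
    ((Q + Aᵀ * W * A) -
        (S + Aᵀ * W * B) * (R + Bᵀ * W * B)⁻¹ * (S + Aᵀ * W * B)ᵀ).PosDef ∧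
      (R + Bᵀ * W * B).PosDef := by
  set G : Matrix (Fin n) (Fin n ⊕ Fin m) ℝ := fromCols A B with hG
  have hGt : Gᴴ = fromRows Aᵀ Bᵀ := by
    show Gᵀ = _
    rw [hG, transpose_fromCols]
  have hGWG : Gᴴ * W * G = fromBlocks (Aᵀ * W * A) (Aᵀ * W * B) (Bᵀ * W * A) (Bᵀ * W * B) := by
    rw [hGt, hG, Matrix.fromRows_mul, Matrix.fromRows_mul_fromCols]
  have hM : (fromBlocks (Q + Aᵀ * W * A) (S + Aᵀ * W * B)
      (S + Aᵀ * W * B)ᴴ (R + Bᵀ * W * B)).PosDef := by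
    have hsum := hL.add_posSemidef (hW.posSemidef.conjTranspose_mul_mul_same G)
    have hct : (S + Aᵀ * W * B)ᴴ = Sᵀ + Bᵀ * W * A := by
      show (S + Aᵀ * W * B)ᵀ = _
      simp [Matrix.transpose_mul, Matrix.mul_assoc, show Wᵀ = W from hW.1]
    rw [hct]
    rw [hGWG] at hsum
    rw [Matrix.fromBlocks_add] at hsum
    exact hsum
  have hD := posDef_block₂₂ hM
  refine ⟨?_, hD⟩
  exact posDef_schur₂₂ hM

/-- In the DDP backward pass with linearized dynamics `A k, B k`, stage-cost
Hessian blocks `Q k, S k, R k` whose joint block matrix is positive definite at every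
stage, and positive definite terminal value Hessian `V N`, the Riccati backward
recursion preserves positive definiteness: every `V k` (k ≤ N) is positive definite
and every control Hessian `H_uu k = R k + (B k)ᵀ V (k+1) B k` (k < N) is positive
definite. -/
theorem riccati_backward_posDef
    {n m : ℕ} (N : ℕ)
    (A : ℕ → Matrix (Fin n) (Fin n) ℝ) (B : ℕ → Matrix (Fin n) (Fin m) ℝ)
    (Q : ℕ → Matrix (Fin n) (Fin n) ℝ) (S : ℕ → Matrix (Fin n) (Fin m) ℝ)
    (R : ℕ → Matrix (Fin m) (Fin m) ℝ)
    (hL : ∀ k < N, (Matrix.fromBlocks (Q k) (S k) (S k)ᵀ (R k)).PosDef)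
    (V : ℕ → Matrix (Fin n) (Fin n) ℝ)
    (hVN : (V N).PosDef)
    (hrec : ∀ k < N,
      V k = (Q k + (A k)ᵀ * V (k + 1) * A k) -
        (S k + (A k)ᵀ * V (k + 1) * B k) * (R k + (B k)ᵀ * V (k + 1) * B k)⁻¹ *
          (S k + (A k)ᵀ * V (k + 1) * B k)ᵀ) :
    (∀ k ≤ N, (V k).PosDef) ∧
      (∀ k < N, (R k + (B k)ᵀ * V (k + 1) * B k).PosDef) := by
  have key : ∀ d, ∀ k, k + d = N → (V k).PosDef := by
    intro d
    induction d with
    | zero =>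
        intro k hk
        have : k = N := by omega
        rw [this]; exact hVN
    | succ d ih =>
        intro k hk
        have hkN : k < N := by omega
        have hV1 : (V (k + 1)).PosDef := ih (k + 1) (by omega)
        have := (riccati_step (A k) (B k) (Q k) (S k) (R k) (hL k hkN) hV1).1
        rw [hrec k hkN]
        exact this
  constructor
  · intro k hk
    exact key (N - k) k (by omega)
  · intro k hk
    have hV1 : (V (k + 1)).PosDef := key (N - (k + 1)) (k + 1) (by omega)
    exact (riccati_step (A k) (B k) (Q k) (S k) (R k) (hL k hk) hV1).2
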